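/- Let R be a Hermitian quartic form on C^2 (complex-linear in slots 1,3, conjugate-linear in slots 2,4, with R(X,Ȳ,Z,W̄) = conj(R(Y,X̄,W,Z̄))), and Ric its first Ricci contraction Ric(X,Ȳ) = Σᵢ R(eᵢ,ēᵢ,X,Ȳ). Fix α,β ∈ ℝ with β ≠ 0 and c ∈ ℝ, and suppose α·Ric(Z,Z̄) + β·R(Z,Z̄,Z,Z̄) = c for all unit Z ∈ C². Writing R_{ij̄kl̄} = R(eᵢ,ēⱼ,e_k,ē_l), then R_{1̄11̄1} + R_{2̄22̄2} − (R_{1̄12̄2} + R_{2̄21̄1} + R_{1̄22̄1} + R_{2̄11̄2}) = 0. -/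
import Mathlib


open BigOperators Finset

noncomputable section

namespace Stmt1

/-- Evaluation of a quartic form on `ℂ^n` given by its components:
complex-linear in slots 1,3, conjugate-linear in slots 2,4. -/
def eval {n : ℕ} (R : Fin n → Fin n → Fin n → Fin n → ℂ) (X Y Z W : Fin n → ℂ) : ℂ :=
  ∑ i, ∑ j, ∑ k, ∑ l,
    X i * (starRingEnd ℂ) (Y j) * Z k * (starRingEnd ℂ) (W l) * R i j k l

/-- First Ricci contraction: `Ric(X, Ȳ) = ∑ᵢ R(eᵢ, ēᵢ, X, Ȳ)`. -/
def ric {n : ℕ} (R : Fin n → Fin n → Fin n → Fin n → ℂ) (X Y : Fin n → ℂ) : ℂ :=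
  ∑ i, ∑ k, ∑ l, X k * (starRingEnd ℂ) (Y l) * R i i k l

/-- If a Hermitian quartic form on `ℂ²` has constant mixed curvature
`α·Ric(Z,Z̄) + β·R(Z,Z̄,Z,Z̄) = c` on unit vectors (with `β ≠ 0`),
then `R₁₁̄₁₁̄ + R₂₂̄₂₂̄ − (R₁₁̄₂₂̄ + R₂₂̄₁₁̄ + R₁₂̄₂₁̄ + R₂₁̄₁₂̄) = 0` (eq. (3.4)). -/
theorem constant_mixed_curvature_W3_vanishes
    (R : Fin 2 → Fin 2 → Fin 2 → Fin 2 → ℂ)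
    (hherm : ∀ i j k l, R i j k l = (starRingEnd ℂ) (R j i l k))
    (α β c : ℝ) (hβ : β ≠ 0)
    (hconst : ∀ Z : Fin 2 → ℂ, (∑ i, Complex.normSq (Z i)) = 1 →
      (α : ℂ) * ric R Z Z + (β : ℂ) * eval R Z Z Z Z = (c : ℂ)) :
    R 0 0 0 0 + R 1 1 1 1 - (R 0 0 1 1 + R 1 1 0 0 + R 0 1 1 0 + R 1 0 0 1) = 0 := by
  set a : ℝ := (Real.sqrt 2)⁻¹ with ha_def
  have ha2r : a ^ 2 = 1 / 2 := by
    rw [ha_def, inv_pow, Real.sq_sqrt (by norm_num : (0:ℝ) ≤ 2)]; norm_num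
  have ht2 : ((a : ℂ)) ^ 2 = 1 / 2 := by
    rw [← Complex.ofReal_pow, ha2r]; norm_num
  have ht4 : ((a : ℂ)) ^ 4 = 1 / 4 := by
    have : ((a:ℂ))^4 = (((a:ℂ))^2)^2 := by ring
    rw [this, ht2]; norm_num
  have hnorm1 : (∑ i, Complex.normSq ((![(1:ℂ), 0]) i)) = 1 := by
    simp [Fin.sum_univ_two]
  have hnorm2 : (∑ i, Complex.normSq ((![(0:ℂ), 1]) i)) = 1 := by
    simp [Fin.sum_univ_two]
  have hnsa : Complex.normSq ((a : ℂ)) = 1/2 := by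
    rw [Complex.normSq_ofReal, ← sq, ha2r]
  have hnv0 : (∑ i, Complex.normSq ((![(a:ℂ), (a:ℂ)]) i)) = 1 := by
    simp [Fin.sum_univ_two, hnsa]; norm_num
  have hnv1 : (∑ i, Complex.normSq ((![(a:ℂ), (a:ℂ) * Complex.I]) i)) = 1 := by
    simp [Fin.sum_univ_two, Complex.normSq_mul, Complex.normSq_I, hnsa]; norm_num
  have hnv2 : (∑ i, Complex.normSq ((![(a:ℂ), -(a:ℂ)]) i)) = 1 := by
    simp [Fin.sum_univ_two, hnsa]; norm_num
  have hnv3 : (∑ i, Complex.normSq ((![(a:ℂ), -((a:ℂ) * Complex.I)]) i)) = 1 := by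
    simp [Fin.sum_univ_two, Complex.normSq_mul, Complex.normSq_I, hnsa]; norm_num
  have he1 := hconst ![(1:ℂ), 0] hnorm1
  have he2 := hconst ![(0:ℂ), 1] hnorm2
  have h0 := hconst ![(a:ℂ), (a:ℂ)] hnv0
  have h1 := hconst ![(a:ℂ), (a:ℂ) * Complex.I] hnv1
  have h2 := hconst ![(a:ℂ), -(a:ℂ)] hnv2
  have h3 := hconst ![(a:ℂ), -((a:ℂ) * Complex.I)] hnv3
  simp only [eval, ric, Fin.sum_univ_two, Matrix.cons_val_zero, Matrix.cons_val_one,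
    Matrix.head_cons, map_zero, map_one, map_mul, map_neg, Complex.conj_I,
    Complex.conj_ofReal] at he1 he2 h0 h1 h2 h3
  have hI2 : Complex.I ^ 2 = -1 := Complex.I_sq
  have hI4 : Complex.I ^ 4 = 1 := by rw [show (4:ℕ) = 2*2 from rfl, pow_mul, hI2]; norm_num
  have key : (β : ℂ) * (R 0 0 0 0 + R 1 1 1 1 -
      (R 0 0 1 1 + R 1 1 0 0 + R 0 1 1 0 + R 1 0 0 1)) = 0 := by
    linear_combination (2:ℂ) * he1 + 2 * he2 - h0 - h1 - h2 - h3
      + (4 * (α:ℂ) * (R 0 0 0 0 + R 1 1 0 0 + R 0 0 1 1 + R 1 1 1 1)) * ht2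
      + (4 * (β:ℂ) * (R 0 0 0 0 + R 1 1 1 1 + R 0 0 1 1 + R 1 1 0 0 + R 0 1 1 0 + R 1 0 0 1)) * ht4
      + (2 * (β:ℂ) * (a:ℂ)^4 * R 1 1 1 1) * hI4
      + (2 * (a:ℂ)^4 * (β:ℂ) * (- R 0 0 1 1 - R 1 1 0 0 - R 0 1 1 0 - R 1 0 0 1 + R 0 1 0 1 + R 1 0 1 0)
         - 2 * (α:ℂ) * (a:ℂ)^2 * (R 1 1 1 1 + R 0 0 1 1)) * hI2
  have hβc : (β : ℂ) ≠ 0 := Complex.ofReal_ne_zero.mpr hβ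
  exact (mul_eq_zero.mp key).resolve_left hβc

end Stmt1
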